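/- For every n ≥ 0 and every nonzero element x of a field K (e.g. K = ℝ), the polynomial Z_n satisfies Z_n(−(x − 1/x)^2) = −(x^n − 1/x^n)^2. -/

import Mathlib

open Polynomial

/-- Lucas-type polynomials: `l 0 = 2`, `l 1 = X`, `l n = X * l (n-1) - l (n-2)`. -/
noncomputable def lucPoly : ℕ → ℤ[X]
  | 0 => 2
  | 1 => X
  | (n + 2) => X * lucPoly (n + 1) - lucPoly n

/-- Herbig's variant of the spread polynomials: `Z n = 2 - lₙ(2 - X)`. -/
noncomputable def Zpoly (n : ℕ) : ℤ[X] := 2 - (lucPoly n).comp (2 - X)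

lemma lucPoly_aeval {K : Type*} [Field K] (n : ℕ) (y : K) (hy : y ≠ 0) :
    (lucPoly n).aeval (y + y⁻¹) = y ^ n + y⁻¹ ^ n := by
  induction n using Nat.twoStepInduction with
  | zero =>
    show (aeval (y + y⁻¹)) (2 : ℤ[X]) = _
    rw [map_ofNat]; norm_num
  | one => simp [lucPoly]
  | more n ih1 ih2 =>
    simp only [lucPoly, map_sub, map_mul, aeval_X, ih1, ih2]
    simp only [inv_pow]
    field_simp
    ring
theorem Zpoly_eval_neg_sq {K : Type*} [Field K] (n : ℕ) (x : K) (hx : x ≠ 0) :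
    (Zpoly n).aeval (-(x - 1 / x) ^ 2) = -(x ^ n - 1 / x ^ n) ^ 2 := by
  have h : (2 : K) - (-(x - 1 / x) ^ 2) = x ^ 2 + (x ^ 2)⁻¹ := by
    field_simp; ring
  have := lucPoly_aeval (K := K) n (x ^ 2) (pow_ne_zero 2 hx)
  simp only [Zpoly, map_sub, aeval_comp, map_ofNat, aeval_X]
  rw [h, this]
  simp only [inv_pow]
  field_simp
  ring
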